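/- arXiv:2510.16314 — 3 statements merged into one kernel-verified Lean document; each statement's English description precedes it below -/
import Mathlib

section
/- Suppose p is a nonalgebraic rational type over k that is nonorthogonal to the fixed field. Then p is minimal if and only if dim(p) = 1. -/
universe u

open scoped Cardinal

/-- A difference field extension of `(k, σ)`: a field `L` together with a field
automorphism `σ_L` and an embedding of `k` into `L` intertwining `σ` and `σ_L`. -/
structure DiffExt (k : Type u) [Field k] (σ : k ≃+* k) where
  carrier : Type u
  [field : Field carrier]
  sigma : carrier ≃+* carrier
  emb : k →+* carrier
  compat : ∀ x : k, sigma (emb x) = emb (σ x)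

attribute [instance] DiffExt.field

namespace DiffExt

variable {k : Type u} [Field k] {σ : k ≃+* k}

/-- The subfield of `L` generated by (the image of) `k` together with a set `S`. -/
def adj (E : DiffExt k σ) (S : Set E.carrier) : Subfield E.carrier :=
  Subfield.closure (Set.range E.emb ∪ S)

end DiffExt

/-- `x` is algebraic over the subfield `F`. -/
def IsAlgOver {L : Type u} [Field L] (F : Subfield L) (x : L) : Prop :=
  ∃ q : Polynomial F, q ≠ 0 ∧ Polynomial.eval₂ F.subtype x q = 0

/-- The transcendence degree over `F` of the subfield generated by `F` and `S`:
the supremum of the cardinalities of subsets of that subfield which are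
algebraically independent over `F`. -/
noncomputable def trdegOver {L : Type u} [Field L] (F : Subfield L) (S : Set L) : Cardinal.{u} :=
  ⨆ t : {t : Set L // t ⊆ (Subfield.closure ((F : Set L) ∪ S) : Set L) ∧
      AlgebraicIndependent F ((↑) : t → L)}, Cardinal.mk t

/-- The algebraic closure of a subfield `F` inside the ambient field `L`. -/
def algClosureIn {L : Type u} [Field L] (F : Subfield L) : Subfield L :=
  Subfield.closure {x | IsAlgOver F x}

/-- A rational type over `k`: a difference field extension `(L₀,σ₀)` together with a
tuple `a₀` such that `σ₀(a₀ⱼ) ∈ k(a₀)` for every `j`. -/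
structure RatType (k : Type u) [Field k] (σ : k ≃+* k) where
  N : ℕ
  ext : DiffExt k σ
  a : Fin N → ext.carrier
  rat : ∀ j, ext.sigma (a j) ∈ ext.adj (Set.range a)

namespace RatType

variable {k : Type u} [Field k] {σ : k ≃+* k}

/-- The field `k(a₀)` of the rational type. -/
def fld (p : RatType k σ) : Subfield p.ext.carrier := p.ext.adj (Set.range p.a)

/-- `b` is a realisation of `p` in the difference field extension `E`: there is a field
isomorphism from `k(a₀)` onto `k(b)` fixing `k`, sending `a₀` to `b` and intertwining
`σ₀` with `σ_L` (given here as a field embedding `ψ : k(a₀) → L`; its image is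
automatically `k(b)`). -/
def IsRealisation (p : RatType k σ) (E : DiffExt k σ) (b : Fin p.N → E.carrier) : Prop :=
  ∃ ψ : p.fld →+* E.carrier,
    (∀ x : k, ψ ⟨p.ext.emb x, Subfield.subset_closure (Set.mem_union_left _ ⟨x, rfl⟩)⟩
        = E.emb x) ∧
    (∀ j, ψ ⟨p.a j, Subfield.subset_closure (Set.mem_union_right _ ⟨j, rfl⟩)⟩ = b j) ∧
    (∀ (u : p.fld) (hu : p.ext.sigma ↑u ∈ p.fld), ψ ⟨p.ext.sigma ↑u, hu⟩ = E.sigma (ψ u))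

/-- The dimension of `p`: the transcendence degree of `k(a₀)` over `k`. -/
noncomputable def dim (p : RatType k σ) : Cardinal.{u} :=
  trdegOver p.ext.emb.fieldRange (Set.range p.a)

/-- `p` is minimal. -/
def Minimal (p : RatType k σ) : Prop :=
  1 ≤ p.dim ∧
  ∀ (E : DiffExt k σ) (K : Subfield E.carrier),
    Set.range E.emb ⊆ (K : Set E.carrier) →
    Subfield.map E.sigma.toRingHom K = K →
    ∀ b : Fin p.N → E.carrier, p.IsRealisation E b →
      (∀ j, IsAlgOver K (b j)) ∨ trdegOver K (Set.range b) = p.dim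

/-- A witness configuration for the degree of nonminimality at `d`. -/
def NmWitness (p : RatType k σ) (d : ℕ) : Prop :=
  ∃ (E : DiffExt k σ) (a : Fin d → Fin p.N → E.carrier) (b : Fin p.N → E.carrier),
    (∀ i, p.IsRealisation E (a i)) ∧ p.IsRealisation E b ∧
    1 ≤ trdegOver (E.adj (⋃ i, Set.range (a i))) (Set.range b) ∧
    trdegOver (E.adj (⋃ i, Set.range (a i))) (Set.range b) < p.dim

/-- The degree of nonminimality of `p`. -/
noncomputable def nmdeg (p : RatType k σ) : ℕ :=
  letI := Classical.propDecidable (p.Minimal ∨ p.dim = 0)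
  if p.Minimal ∨ p.dim = 0 then 0 else sInf {d : ℕ | 1 ≤ d ∧ p.NmWitness d}

end RatType

/-- Two tuples are σ-disjoint if neither is a transform of the other by an
integer power of `σ_L`. -/
def SigmaDisjoint {k : Type u} [Field k] {σ : k ≃+* k} (E : DiffExt k σ) {N : ℕ}
    (b b' : Fin N → E.carrier) : Prop :=
  ∀ r : ℤ, b ≠ fun j => (E.sigma ^ r) (b' j)

namespace RatType

variable {k : Type u} [Field k] {σ : k ≃+* k}

/-- `p` is `m`-disintegrated. -/
def Disintegrated (p : RatType k σ) (m : ℕ) : Prop :=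
  ∀ (E : DiffExt k σ) (b : Fin m → Fin p.N → E.carrier),
    (∀ i, p.IsRealisation E (b i)) →
    (∀ i i', i ≠ i' → SigmaDisjoint E (b i) (b i')) →
    trdegOver E.emb.fieldRange (⋃ i, Set.range (b i)) = (m : Cardinal) * p.dim

/-- `p` is totally disintegrated. -/
def TotallyDisintegrated (p : RatType k σ) : Prop :=
  ∀ m : ℕ, 1 ≤ m → p.Disintegrated m

/-- `p` is one-based. -/
def OneBased (p : RatType k σ) : Prop :=
  ∀ (E : DiffExt k σ), IsAlgClosed E.carrier →
    ∀ (r s : ℕ) (a : Fin r → Fin p.N → E.carrier) (b : Fin s → Fin p.N → E.carrier),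
      (∀ i, p.IsRealisation E (a i)) → (∀ i, p.IsRealisation E (b i)) →
      trdegOver
        (Subfield.closure
          (((algClosureIn (E.adj (⋃ i, Set.range (a i))) ⊓
             algClosureIn (E.adj (⋃ i, Set.range (b i)))) : Subfield E.carrier) ∪
            ⋃ i, Set.range (b i)))
        (⋃ i, Set.range (a i))
      = trdegOver
          ((algClosureIn (E.adj (⋃ i, Set.range (a i))) ⊓
            algClosureIn (E.adj (⋃ i, Set.range (b i)))) : Subfield E.carrier)
          (⋃ i, Set.range (a i))

/-- `p` is qf-internal to the fixed field. -/
def QfInternal (p : RatType k σ) : Prop :=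
  ∃ (E : DiffExt k σ) (b : Fin p.N → E.carrier) (K : Subfield E.carrier),
    p.IsRealisation E b ∧
    Set.range E.emb ⊆ (K : Set E.carrier) ∧
    Subfield.map E.sigma.toRingHom K = K ∧
    trdegOver K (Set.range b) = p.dim ∧
    ∃ (M : ℕ) (c : Fin M → E.carrier),
      (∀ i, E.sigma (c i) = c i) ∧
      ∀ j, b j ∈ Subfield.closure ((K : Set E.carrier) ∪ Set.range c)

/-- `p` satisfies exchange. -/
def Exchange (p : RatType k σ) : Prop :=
  ∀ (E : DiffExt k σ) (a : Fin p.N → E.carrier), p.IsRealisation E a →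
    ∀ (M : ℕ) (b : Fin M → E.carrier),
      (∀ j, IsAlgOver (E.adj (Set.range a)) (b j)) →
      (∀ j, E.sigma (b j) ∈ E.adj (Set.range b)) →
      (¬ ∀ j, b j ∈ Set.range E.emb) →
      ∀ j, IsAlgOver (E.adj (Set.range b)) (a j)

/-- `p` is nonorthogonal to the fixed field. -/
def NonorthFixed (p : RatType k σ) : Prop :=
  ∃ (E : DiffExt k σ) (K : Subfield E.carrier) (a : Fin p.N → E.carrier),
    Set.range E.emb ⊆ (K : Set E.carrier) ∧
    Subfield.map E.sigma.toRingHom K = K ∧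
    p.IsRealisation E a ∧
    trdegOver K (Set.range a) = p.dim ∧
    ∃ (M : ℕ) (c : Fin M → E.carrier),
      (∀ i, E.sigma (c i) = c i) ∧
      trdegOver (Subfield.closure ((K : Set E.carrier) ∪ Set.range c)) (Set.range a) < p.dim

end RatType


set_option synthInstance.maxHeartbeats 1000000
set_option maxHeartbeats 2000000

namespace SFH
variable {L : Type u} [Field L]

variable {L : Type u} [Field L]

theorem adjoin_toSubfield' (F : Subfield L) (S : Set L) :
    (IntermediateField.adjoin ↥F S).toSubfield = Subfield.closure (↑F ∪ S) := by
  rw [IntermediateField.adjoin_toSubfield]; congr 1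
  rw [show (algebraMap ↥F L) = F.subtype from rfl, Subfield.coe_subtype, Subtype.range_coe]

theorem mem_closure_iff_mem_adjoin (F : Subfield L) (S : Set L) (z : L) :
    z ∈ Subfield.closure (↑F ∪ S) ↔ z ∈ IntermediateField.adjoin ↥F S := by
  rw [← adjoin_toSubfield']; rfl

theorem isAlgOver_iff_isAlgebraic (F : Subfield L) (z : L) :
    IsAlgOver F z ↔ IsAlgebraic ↥F z := Iff.rfl

theorem isAlgOver_closure_iff (F : Subfield L) (S : Set L) (z : L) :
    IsAlgOver (Subfield.closure (↑F ∪ S)) z ↔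
      IsAlgebraic ↥(IntermediateField.adjoin ↥F S) z := by
  rw [← adjoin_toSubfield']; rfl

theorem alg_mono {F K : Subfield L} {z : L} (h : IsAlgebraic ↥F z) (hFK : F ≤ K) :
    IsAlgebraic ↥K z := by
  obtain ⟨q, hq0, hq⟩ := h
  have hinj : Function.Injective (Subfield.inclusion hFK) := fun a b hab =>
    Subtype.ext (congrArg Subtype.val hab : ((Subfield.inclusion hFK a : ↥K) : L) = _)
  refine ⟨q.map (Subfield.inclusion hFK), fun h' => hq0 (Polynomial.map_injective _ hinj (by simpa using h')), ?_⟩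
  rw [Polynomial.aeval_def, Polynomial.eval₂_map]
  rw [show (algebraMap ↥K L).comp ((Subfield.inclusion hFK) : ↥F →+* ↥K) = algebraMap ↥F L from RingHom.ext fun a => rfl]
  exact hq

theorem talg (F : Subfield L) (x z : L) (hx : IsAlgebraic ↥F x)
    (hz : IsAlgebraic ↥(IntermediateField.adjoin ↥F ({x} : Set L)) z) : IsAlgebraic ↥F z := by
  haveI h1 : Algebra.IsAlgebraic ↥F ↥(IntermediateField.adjoin ↥F ({x} : Set L)) :=
    IntermediateField.isAlgebraic_adjoin_simple (isAlgebraic_iff_isIntegral.mp hx)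
  haveI : Algebra.IsIntegral ↥F ↥(IntermediateField.adjoin ↥F ({x} : Set L)) :=
    Algebra.isAlgebraic_iff_isIntegral.mp h1
  exact isAlgebraic_iff_isIntegral.mpr (isIntegral_trans _ (isAlgebraic_iff_isIntegral.mp hz))

theorem algA (F : Subfield L) (S : Set L) (hS : ∀ s ∈ S, IsAlgebraic ↥F s) {z : L}
    (hz : z ∈ Subfield.closure (↑F ∪ S)) : IsAlgebraic ↥F z := by
  haveI : Algebra.IsAlgebraic ↥F ↥(IntermediateField.adjoin ↥F S) :=
    IntermediateField.isAlgebraic_adjoin (fun s hs => isAlgebraic_iff_isIntegral.mp (hS s hs))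
  rw [mem_closure_iff_mem_adjoin] at hz
  obtain ⟨q, hq0, hq⟩ :=
    Algebra.IsAlgebraic.isAlgebraic (R := ↥F) (⟨z, hz⟩ : IntermediateField.adjoin ↥F S)
  refine ⟨q, hq0, ?_⟩
  have := Polynomial.aeval_algebraMap_apply L (⟨z, hz⟩ : IntermediateField.adjoin ↥F S) q
  rw [hq, map_zero] at this
  exact this



theorem KEa (F : Subfield L) (u v : L)
    (h : IsAlgebraic ↥(IntermediateField.adjoin ↥F ({u} : Set L)) v) :
    ¬ AlgebraicIndependent ↥F ![u, v] := by
  intro hind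
  set T := IntermediateField.adjoin ↥F ({u} : Set L) with hT
  obtain ⟨q, hq0, hq⟩ := h
  set n := q.natDegree with hn
  have hcoeff : ∀ j : ℕ, ∃ rs : Polynomial ↥F × Polynomial ↥F,
      Polynomial.aeval u rs.2 ≠ 0 ∧
      ((q.coeff j : L)) * Polynomial.aeval u rs.2 = Polynomial.aeval u rs.1 := by
    intro j
    by_cases hc : q.coeff j = 0
    · exact ⟨(0, 1), by simp, by simp [hc]⟩
    · have hmem : ((q.coeff j : L)) ∈ T := (q.coeff j).2
      obtain ⟨r, s, hrs⟩ := (IntermediateField.mem_adjoin_simple_iff (F := ↥F) _).mp hmem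
      have hs0 : Polynomial.aeval u s ≠ 0 := by
        intro h0
        rw [h0, div_zero] at hrs
        exact hc (Subtype.ext hrs)
      refine ⟨(r, s), hs0, ?_⟩
      rw [hrs]; field_simp
  choose rs hs0 hrel using hcoeff
  have umem : u ∈ T := IntermediateField.mem_adjoin_simple_self ↥F u
  let ι₀ : Polynomial ↥F →ₐ[↥F] MvPolynomial (Fin 2) ↥F :=
    Polynomial.aeval (MvPolynomial.X 0)
  set D := ∏ i ∈ Finset.range (n + 1), Polynomial.aeval u (rs i).2 with hDdef
  let P : MvPolynomial (Fin 2) ↥F :=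
    ∑ j ∈ Finset.range (n + 1),
      ι₀ ((rs j).1 * ∏ i ∈ (Finset.range (n + 1)).erase j, (rs i).2) * (MvPolynomial.X 1) ^ j
  have keyι : ∀ g : Polynomial ↥F, MvPolynomial.aeval ![u, v] (ι₀ g) = Polynomial.aeval u g := by
    intro g
    have h2 : (MvPolynomial.aeval (R := ↥F) ![u, v]).comp ι₀ = Polynomial.aeval u := by
      apply Polynomial.algHom_ext
      simp [ι₀]
    exact congrFun (congrArg (fun f => f.toFun) h2) g
  have claim1 : MvPolynomial.aeval ![u, v] P = 0 := by
    have expand : MvPolynomial.aeval ![u, v] P =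
        ∑ j ∈ Finset.range (n + 1), ((q.coeff j : L) * D) * v ^ j := by
      rw [map_sum]
      apply Finset.sum_congr rfl
      intro j hj
      rw [map_mul, map_pow, MvPolynomial.aeval_X, keyι, map_mul, map_prod]
      have h3 : Polynomial.aeval u (rs j).1 * ∏ i ∈ (Finset.range (n + 1)).erase j,
          Polynomial.aeval u (rs i).2 = (q.coeff j : L) * D := by
        rw [← hrel j, hDdef, ← Finset.mul_prod_erase _ _ hj]
        ring
      rw [h3]
      simp [Matrix.cons_val_one]
    rw [expand]
    have step : ∑ j ∈ Finset.range (n + 1), ((q.coeff j : L) * D) * v ^ j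
        = D * ∑ j ∈ Finset.range (n + 1), (algebraMap ↥T L) (q.coeff j) * v ^ j := by
      rw [Finset.mul_sum]
      apply Finset.sum_congr rfl
      intro j _
      show ((q.coeff j : L) * D) * v ^ j = D * ((q.coeff j : L) * v ^ j)
      ring
    rw [step, hn, ← Polynomial.eval₂_eq_sum_range, ← Polynomial.aeval_def, hq, mul_zero]
  have claim2 : P ≠ 0 := by
    intro hP0
    let Θ : MvPolynomial (Fin 2) ↥F →ₐ[↥F] Polynomial ↥T :=
      MvPolynomial.aeval ![Polynomial.C (⟨u, umem⟩ : T), Polynomial.X]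
    have keyΘ : ∀ g : Polynomial ↥F,
        Θ (ι₀ g) = Polynomial.C (Polynomial.aeval (⟨u, umem⟩ : T) g) := by
      intro g
      have h2 : Θ.comp ι₀ = (Polynomial.CAlgHom).comp (Polynomial.aeval (⟨u, umem⟩ : T)) := by
        apply Polynomial.algHom_ext
        simp [ι₀, Θ, Polynomial.CAlgHom]
      exact congrFun (congrArg (fun f => f.toFun) h2) g
    have coeT : ∀ g : Polynomial ↥F,
        ((Polynomial.aeval (⟨u, umem⟩ : T) g : T) : L) = Polynomial.aeval u g := by
      intro g
      have := Polynomial.aeval_algebraMap_apply L (⟨u, umem⟩ : T) g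
      simpa using this.symm
    have ej : ∀ j, Polynomial.aeval (⟨u, umem⟩ : T) (rs j).1
        = q.coeff j * Polynomial.aeval (⟨u, umem⟩ : T) (rs j).2 := by
      intro j
      apply Subtype.coe_injective
      push_cast [coeT]
      rw [← hrel j]
    have hΘP : Θ P = Polynomial.C (∏ i ∈ Finset.range (n + 1),
        Polynomial.aeval (⟨u, umem⟩ : T) (rs i).2) * q := by
      show Θ (∑ j ∈ Finset.range (n + 1), _) = _
      rw [map_sum]
      have exq : q = ∑ j ∈ Finset.range (n + 1), Polynomial.C (q.coeff j) * Polynomial.X ^ j := by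
        conv_lhs => rw [Polynomial.as_sum_range' q (n + 1) (Nat.lt_succ_self n)]
        apply Finset.sum_congr rfl
        intro j _
        rw [Polynomial.C_mul_X_pow_eq_monomial]
      conv_rhs => rw [exq]
      rw [Finset.mul_sum]
      apply Finset.sum_congr rfl
      intro j hj
      rw [map_mul, map_pow, MvPolynomial.aeval_X, keyΘ, map_mul, map_prod]
      rw [ej j, ← Finset.mul_prod_erase _ _ hj]
      simp only [Matrix.cons_val_one, Matrix.head_cons, Matrix.cons_val_zero, map_mul]
      ring
    rw [hP0, map_zero] at hΘP
    rcases mul_eq_zero.mp hΘP.symm with h1 | h2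
    · have hD0 := Polynomial.C_eq_zero.mp h1
      rw [Finset.prod_eq_zero_iff] at hD0
      obtain ⟨i, _, hi0⟩ := hD0
      apply hs0 i
      rw [← coeT, hi0]
      simp
    · exact hq0 h2
  exact claim2 (algebraicIndependent_iff.mp hind P claim1)




theorem KEb (F : Subfield L) (u v : L) (hu : Transcendental ↥F u)
    (h : ¬ AlgebraicIndependent ↥F ![u, v]) :
    IsAlgebraic ↥(IntermediateField.adjoin ↥F ({u} : Set L)) v := by
  rw [algebraicIndependent_iff] at h
  push_neg at h
  obtain ⟨P, hPval, hP0⟩ := h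
  set T := IntermediateField.adjoin ↥F ({u} : Set L) with hT
  have umem : u ∈ T := IntermediateField.mem_adjoin_simple_self ↥F u
  set P' := MvPolynomial.rename (Equiv.swap (0 : Fin 2) 1) P with hP'
  have hval' : MvPolynomial.aeval ![v, u] P' = 0 := by
    rw [hP', MvPolynomial.aeval_rename]
    have hcv : (![v, u] : Fin 2 → L) ∘ (Equiv.swap (0 : Fin 2) 1) = ![u, v] := by
      funext i
      fin_cases i <;> simp
    rw [hcv, hPval]
  have hP'0 : P' ≠ 0 := by
    intro h0
    apply hP0
    have hinj := MvPolynomial.rename_injective (R := ↥F)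
      (Equiv.swap (0 : Fin 2) 1) (Equiv.injective _)
    apply hinj
    rw [← hP', h0, map_zero]
  set Q := MvPolynomial.finSuccEquiv ↥F 1 P' with hQ
  have hQ0 : Q ≠ 0 := by
    intro h0
    apply hP'0
    apply (MvPolynomial.finSuccEquiv ↥F 1).injective
    rw [← hQ, h0, map_zero]
  let γA := MvPolynomial.aeval (R := ↥F) (fun _ : Fin 1 => (⟨u, umem⟩ : T))
  let γ : MvPolynomial (Fin 1) ↥F →+* ↥T := γA.toRingHom
  have hγinj : Function.Injective γ := by
    have htr : Transcendental ↥F (⟨u, umem⟩ : T) := by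
      intro halg
      apply hu
      obtain ⟨g, hg0, hg⟩ := halg
      refine ⟨g, hg0, ?_⟩
      have := Polynomial.aeval_algebraMap_apply L (⟨u, umem⟩ : T) g
      rw [hg, map_zero] at this
      simpa using this
    have : AlgebraicIndependent ↥F (fun _ : Fin 1 => (⟨u, umem⟩ : T)) := by
      rw [algebraicIndependent_unique_type_iff]
      exact htr
    exact algebraicIndependent_iff_injective_aeval.mp this
  refine ⟨Q.map γ, by
    intro h0
    exact hQ0 ((Polynomial.map_eq_zero_iff hγinj).mp h0), ?_⟩
  have heval : Polynomial.aeval v (Q.map γ) = MvPolynomial.aeval ![v, u] P' := by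
    rw [Polynomial.aeval_def, Polynomial.eval₂_map]
    have heq : (Polynomial.eval₂RingHom ((algebraMap ↥T L).comp γ) v).comp
        ((MvPolynomial.finSuccEquiv ↥F 1) : MvPolynomial (Fin 2) ↥F →+* Polynomial (MvPolynomial (Fin 1) ↥F))
        = ((MvPolynomial.aeval (R := ↥F) ![v, u]) : MvPolynomial (Fin 2) ↥F →ₐ[↥F] L).toRingHom := by
      apply MvPolynomial.ringHom_ext
      · intro a
        simp only [RingHom.coe_comp, Function.comp_apply, RingHom.coe_coe]
        rw [show ((MvPolynomial.finSuccEquiv ↥F 1) (MvPolynomial.C a) : Polynomial (MvPolynomial (Fin 1) ↥F)) = Polynomial.C (MvPolynomial.C a) from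
          by rw [MvPolynomial.finSuccEquiv_apply]; simp]
        simp [γ, γA]
      · intro i
        match i with
        | 0 =>
          simp only [RingHom.coe_comp, Function.comp_apply, RingHom.coe_coe]
          rw [show ((0 : Fin 2)) = (0 : Fin (1+1)) from rfl, MvPolynomial.finSuccEquiv_X_zero]
          simp
        | 1 =>
          simp only [RingHom.coe_comp, Function.comp_apply, RingHom.coe_coe]
          rw [show ((1 : Fin 2)) = ((0 : Fin 1).succ : Fin (1+1)) from rfl,
            MvPolynomial.finSuccEquiv_X_succ]
          simp [γ, γA]
    have := congrFun (congrArg (fun f => f.toFun) heq) P'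
    simpa using this
  rw [heval, hval']




theorem swap_indep {R : Type u} [CommRing R] [Algebra R L] {a b : L}
    (h : AlgebraicIndependent R ![a, b]) : AlgebraicIndependent R ![b, a] := by
  have h2 := h.comp (Equiv.swap (0 : Fin 2) 1) (Equiv.injective _)
  have hc : (![a, b] : Fin 2 → L) ∘ (Equiv.swap (0 : Fin 2) 1) = ![b, a] := by
    funext i; fin_cases i <;> simp
  rwa [hc] at h2

theorem pair_indep (F : Subfield L) {t : Set L}
    (ht : AlgebraicIndependent ↥F ((↑) : t → L))
    {y z : L} (hy : y ∈ t) (hz : z ∈ t) (hne : y ≠ z) :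
    AlgebraicIndependent ↥F ![y, z] := by
  have hinj : Function.Injective (fun i : Fin 2 => if i = 0 then (⟨y, hy⟩ : t) else ⟨z, hz⟩) := by
    intro i i' hh
    fin_cases i <;> fin_cases i' <;> simp_all
  have h2 := ht.comp _ hinj
  have hc : ((↑) : t → L) ∘ (fun i : Fin 2 => if i = 0 then (⟨y, hy⟩ : t) else ⟨z, hz⟩)
      = ![y, z] := by
    funext i; fin_cases i <;> simp
  rwa [hc] at h2

theorem core0 (F : Subfield L) {t : Set L}
    (ht : AlgebraicIndependent ↥F ((↑) : t → L))
    (halg : ∀ z ∈ t, IsAlgebraic ↥F z) : t = ∅ := by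
  by_contra hne
  obtain ⟨z, hz⟩ := Set.nonempty_iff_ne_empty.mpr hne
  exact ht.transcendental ⟨z, hz⟩ (halg z hz)

theorem core (F : Subfield L) (x : L) {t : Set L}
    (ht : AlgebraicIndependent ↥F ((↑) : t → L))
    (halg : ∀ z ∈ t, IsAlgebraic ↥(IntermediateField.adjoin ↥F ({x} : Set L)) z) :
    t.Subsingleton := by
  intro y hy z hz
  by_contra hne
  have pair := pair_indep F ht hy hz hne
  have hyt : Transcendental ↥F y := ht.transcendental ⟨y, hy⟩
  by_cases hx : IsAlgebraic ↥F x
  · exact hyt (talg F x y hx (halg y hy))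
  · have hxy : ¬ AlgebraicIndependent ↥F ![x, y] := KEa F x y (halg y hy)
    have hyx : ¬ AlgebraicIndependent ↥F ![y, x] := fun hi => hxy (swap_indep hi)
    have hxAlgY : IsAlgebraic ↥(IntermediateField.adjoin ↥F ({y} : Set L)) x :=
      KEb F y x hyt hyx
    have hxG : IsAlgebraic ↥(Subfield.closure (↑F ∪ ({y} : Set L))) x := by
      rw [← adjoin_toSubfield' F ({y} : Set L)]
      exact hxAlgY
    set G := Subfield.closure (↑F ∪ ({y} : Set L)) with hG
    have hzx' : IsAlgebraic ↥(IntermediateField.adjoin ↥G ({x} : Set L)) z := by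
      have h1 : IsAlgebraic ↥((IntermediateField.adjoin ↥F ({x} : Set L)).toSubfield) z :=
        halg z hz
      have hle : (IntermediateField.adjoin ↥F ({x} : Set L)).toSubfield
          ≤ (IntermediateField.adjoin ↥G ({x} : Set L)).toSubfield := by
        rw [adjoin_toSubfield', adjoin_toSubfield']
        apply Subfield.closure_mono
        apply Set.union_subset_union_left
        intro w hw
        exact Subfield.subset_closure (Or.inl hw)
      exact alg_mono h1 hle
    have hzG : IsAlgebraic ↥G z := talg G x z hxG hzx'
    apply KEa F y z ?_ pair
    rw [show (IntermediateField.adjoin ↥F ({y} : Set L)) = _ from rfl]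
    have : IsAlgebraic ↥((IntermediateField.adjoin ↥F ({y} : Set L)).toSubfield) z := by
      rw [adjoin_toSubfield' F ({y} : Set L)]
      exact hzG
    exact this


theorem trdegOver_le (F : Subfield L) (S : Set L) {κ : Cardinal.{u}}
    (h : ∀ t : Set L, t ⊆ (Subfield.closure ((F : Set L) ∪ S) : Set L) →
      AlgebraicIndependent F ((↑) : t → L) → Cardinal.mk t ≤ κ) :
    trdegOver F S ≤ κ :=
  ciSup_le' fun tt => h tt.1 tt.2.1 tt.2.2

theorem le_trdegOver (F : Subfield L) (S : Set L) {t : Set L}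
    (h1 : t ⊆ (Subfield.closure ((F : Set L) ∪ S) : Set L))
    (h2 : AlgebraicIndependent F ((↑) : t → L)) :
    Cardinal.mk t ≤ trdegOver F S := by
  have hb : BddAbove (Set.range fun tt : {t : Set L //
      t ⊆ (Subfield.closure ((F : Set L) ∪ S) : Set L) ∧
      AlgebraicIndependent F ((↑) : t → L)} => Cardinal.mk tt) := by
    refine ⟨Cardinal.mk L, ?_⟩
    rintro c ⟨tt, rfl⟩
    exact Cardinal.mk_set_le tt.1
  exact le_ciSup hb ⟨t, h1, h2⟩

theorem one_le_trdegOver (F : Subfield L) (S : Set L) (x : L)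
    (hx : x ∈ Subfield.closure ((F : Set L) ∪ S))
    (htr : Transcendental ↥F x) : 1 ≤ trdegOver F S := by
  have hind : AlgebraicIndependent ↥F ((↑) : ({x} : Set L) → L) := by
    rw [algebraicIndependent_unique_type_iff]
    simpa using htr
  have := le_trdegOver F S (t := {x}) (by simpa using hx) hind
  simpa using this

theorem alg_of_trdegOver_eq_zero {F : Subfield L} {S : Set L}
    (h : trdegOver F S = 0) {z : L} (hz : z ∈ Subfield.closure ((F : Set L) ∪ S)) :
    IsAlgebraic ↥F z := by
  by_contra htr
  have h1 := one_le_trdegOver F S z hz htr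
  rw [h] at h1
  simp at h1

theorem trdegOver_eq_zero {F : Subfield L} {S : Set L}
    (h : ∀ z ∈ Subfield.closure ((F : Set L) ∪ S), IsAlgebraic ↥F z) :
    trdegOver F S = 0 := by
  apply le_antisymm _ (zero_le)
  apply trdegOver_le
  intro t hsub hind
  have ht : t = ∅ := core0 F hind (fun z hz => h z (hsub hz))
  subst ht
  simp

theorem two_le_trdegOver (F : Subfield L) (S : Set L) {y z : L}
    (hy : y ∈ Subfield.closure ((F : Set L) ∪ S))
    (hz : z ∈ Subfield.closure ((F : Set L) ∪ S))
    (hne : y ≠ z) (hind : AlgebraicIndependent ↥F ![y, z]) :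
    2 ≤ trdegOver F S := by
  have hr : Set.range ![y, z] = {y, z} := by
    ext w
    simp [Fin.exists_fin_two, eq_comm, or_comm]
  have hcoe := hind.coe_range
  rw [hr] at hcoe
  have hle := le_trdegOver F S (t := {y, z})
    (by
      intro w hw
      rcases hw with rfl | rfl
      · exact hy
      · exact hz) hcoe
  refine le_trans ?_ hle
  rw [Cardinal.mk_insert (by simpa using hne), Cardinal.mk_singleton]
  norm_num

theorem closure_closure_union (A B : Set L) :
    Subfield.closure (↑(Subfield.closure A) ∪ B) = Subfield.closure (A ∪ B) := by
  apply le_antisymm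
  · apply Subfield.closure_le.mpr
    apply Set.union_subset
    · intro w hw
      exact Subfield.closure_mono Set.subset_union_left hw
    · intro w hw
      exact Subfield.subset_closure (Or.inr hw)
  · apply Subfield.closure_mono
    exact Set.union_subset_union_left _ Subfield.subset_closure

theorem map_closure' (f : L →+* L) (S : Set L) :
    Subfield.map f (Subfield.closure S) = Subfield.closure (f '' S) := by
  apply le_antisymm
  · rw [Subfield.map_le_iff_le_comap]
    apply Subfield.closure_le.mpr
    intro w hw
    have : f w ∈ Subfield.closure (f '' S) :=
      Subfield.subset_closure (Set.mem_image_of_mem f hw)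
    exact this
  · apply Subfield.closure_le.mpr
    rintro _ ⟨w, hw, rfl⟩
    exact ⟨w, Subfield.subset_closure hw, rfl⟩


theorem pullback_pair {k : Type u} [Field k] {σ : k ≃+* k} (p : RatType k σ)
    (E : DiffExt k σ) (K : Subfield E.carrier)
    (hKk : Set.range E.emb ⊆ (K : Set E.carrier))
    (b : Fin p.N → E.carrier)
    (ψ : p.fld →+* E.carrier)
    (hψk : ∀ x : k, ψ ⟨p.ext.emb x, Subfield.subset_closure (Set.mem_union_left _ ⟨x, rfl⟩)⟩
        = E.emb x)
    (hψa : ∀ j, ψ ⟨p.a j, Subfield.subset_closure (Set.mem_union_right _ ⟨j, rfl⟩)⟩ = b j)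
    (j₀ j : Fin p.N)
    (hpair : AlgebraicIndependent ↥K ![b j₀, b j]) :
    AlgebraicIndependent ↥(p.ext.emb.fieldRange) ![p.a j₀, p.a j] := by
  rw [algebraicIndependent_iff]
  intro P hP
  have hle : p.ext.emb.fieldRange ≤ p.fld := by
    rintro w hw
    obtain ⟨x, rfl⟩ := RingHom.mem_fieldRange.mp hw
    exact Subfield.subset_closure (Or.inl ⟨x, rfl⟩)
  let ρ : ↥p.ext.emb.fieldRange →+* ↥p.fld := Subfield.inclusion hle
  have hamem : ∀ j', p.a j' ∈ p.fld := fun j' => Subfield.subset_closure (Or.inr ⟨j', rfl⟩)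
  let av : Fin 2 → ↥p.fld := ![⟨p.a j₀, hamem j₀⟩, ⟨p.a j, hamem j⟩]
  set w : ↥p.fld := MvPolynomial.eval₂ ρ av P with hwdef
  have hw0 : w = 0 := by
    apply Subtype.coe_injective
    have h1 : (p.fld.subtype) w = MvPolynomial.eval₂ (p.fld.subtype.comp ρ)
        (fun i => ((av i : ↥p.fld) : p.ext.carrier)) P := by
      rw [hwdef]
      exact MvPolynomial.eval₂_comp_left _ _ _ _
    have h2 : p.fld.subtype.comp ρ = p.ext.emb.fieldRange.subtype := RingHom.ext fun u => rfl
    have h3 : (fun i => ((av i : ↥p.fld) : p.ext.carrier)) = ![p.a j₀, p.a j] := by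
      funext i
      fin_cases i <;> rfl
    show (p.fld.subtype) w = _
    rw [h1, h2, h3]
    exact hP
  have hembinj : Function.Injective p.ext.emb := p.ext.emb.injective
  let e₀ : k ≃+* ↥p.ext.emb.fieldRange := RingEquiv.ofBijective p.ext.emb.rangeRestrictField
    ⟨fun x y hxy => hembinj (by
        have := congrArg Subtype.val hxy
        rwa [RingHom.coe_rangeRestrictField, RingHom.coe_rangeRestrictField] at this),
     by
        rintro ⟨wv, x, rfl⟩
        exact ⟨x, Subtype.ext (RingHom.coe_rangeRestrictField _ x)⟩⟩
  let μ0 : ↥p.ext.emb.fieldRange →+* E.carrier := E.emb.comp e₀.symm.toRingHom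
  have hμ0K : ∀ u, μ0 u ∈ K := fun u => hKk ⟨_, rfl⟩
  let μ : ↥p.ext.emb.fieldRange →+* ↥K := μ0.codRestrict K hμ0K
  have hcoe_e₀ : ∀ x : k, ((e₀ x : ↥p.ext.emb.fieldRange) : p.ext.carrier) = p.ext.emb x :=
    fun x => RingHom.coe_rangeRestrictField _ x
  have hψρ : ∀ u, ψ (ρ u) = μ0 u := by
    intro u
    have hx : e₀ (e₀.symm u) = u := e₀.apply_symm_apply u
    have hux : (u : p.ext.carrier) = p.ext.emb (e₀.symm u) := by
      have h11 := hcoe_e₀ (e₀.symm u)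
      rw [hx] at h11
      exact h11
    have hρu : ρ u = ⟨p.ext.emb (e₀.symm u),
        Subfield.subset_closure (Set.mem_union_left _ ⟨e₀.symm u, rfl⟩)⟩ :=
      Subtype.ext hux
    rw [hρu, hψk (e₀.symm u)]
    rfl
  have key : MvPolynomial.aeval ![b j₀, b j] (MvPolynomial.map μ P) = 0 := by
    rw [MvPolynomial.aeval_def, MvPolynomial.eval₂_map]
    have hcomp : ((algebraMap ↥K E.carrier : ↥K →+* E.carrier)).comp μ = ψ.comp ρ :=
      RingHom.ext fun u => (hψρ u).symm
    rw [hcomp]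
    have h5 : ψ w = MvPolynomial.eval₂ (ψ.comp ρ) (fun i => ψ (av i)) P := by
      rw [hwdef]
      exact MvPolynomial.eval₂_comp_left _ _ _ _
    have h6 : (fun i => ψ (av i)) = ![b j₀, b j] := by
      funext i
      fin_cases i
      · exact hψa j₀
      · exact hψa j
    rw [← h6, ← h5, hw0, map_zero]
  have hPμ : MvPolynomial.map μ P = 0 := algebraicIndependent_iff.mp hpair _ key
  have hμinj : Function.Injective μ := by
    intro x y hxy
    have h7 : μ0 x = μ0 y := congrArg Subtype.val hxy
    have h8 := E.emb.injective h7
    exact e₀.symm.injective h8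
  exact MvPolynomial.map_injective μ hμinj (by rw [hPμ, map_zero])

end SFH

open SFH in
theorem statement15 {k : Type u} [Field k] [IsAlgClosed k] [CharZero k]
    (σ : k ≃+* k) (p : RatType k σ) (hp : 1 ≤ p.dim)
    (h : p.NonorthFixed) :
    p.Minimal ↔ p.dim = 1 := by
  constructor
  · -- Minimal → dim = 1
    intro hmin
    obtain ⟨E, K, a, hKk, hKσ, hreal, htrd, M, c, hcfix, hlt⟩ := h
    set Kc : ℕ → Subfield E.carrier := fun i =>
      Subfield.closure (↑K ∪ (c '' {j : Fin M | (j : ℕ) < i})) with hKcdef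
    have hKsub : ∀ i, (K : Set E.carrier) ⊆ ↑(Kc i) := fun i w hw =>
      Subfield.subset_closure (Or.inl hw)
    have hKc_k : ∀ i, Set.range E.emb ⊆ ↑(Kc i) := fun i =>
      subset_trans hKk (hKsub i)
    have hKc_σ : ∀ i, Subfield.map E.sigma.toRingHom (Kc i) = Kc i := by
      intro i
      show Subfield.map E.sigma.toRingHom
          (Subfield.closure (↑K ∪ (c '' {j : Fin M | (j : ℕ) < i})))
        = Subfield.closure (↑K ∪ (c '' {j : Fin M | (j : ℕ) < i}))
      rw [map_closure']
      congr 1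
      rw [Set.image_union]
      congr 1
      · have := congrArg (fun s : Subfield E.carrier => (s : Set E.carrier)) hKσ
        simpa [Subfield.coe_map] using this
      · rw [Set.image_image]
        apply Set.image_congr
        intro j _
        exact hcfix j
    have hdich : ∀ i, trdegOver (Kc i) (Set.range a) = 0 ∨
        trdegOver (Kc i) (Set.range a) = p.dim := by
      intro i
      rcases hmin.2 E (Kc i) (hKc_k i) (hKc_σ i) a hreal with hall | heq
      · left
        apply trdegOver_eq_zero
        intro z hz
        exact algA (Kc i) (Set.range a)
          (by rintro s ⟨j, rfl⟩; exact hall j) hz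
      · right; exact heq
    have h0 : trdegOver (Kc 0) (Set.range a) = p.dim := by
      have hK0 : Kc 0 = K := by
        show Subfield.closure (↑K ∪ (c '' {j : Fin M | (j : ℕ) < 0})) = K
        have he : {j : Fin M | (j : ℕ) < 0} = ∅ := by
          ext j; simp
        rw [he, Set.image_empty, Set.union_empty, Subfield.closure_eq]
      rw [hK0]
      exact htrd
    have hM : trdegOver (Kc M) (Set.range a) = 0 := by
      have hKcM : Kc M = Subfield.closure (↑K ∪ Set.range c) := by
        show Subfield.closure (↑K ∪ (c '' {j : Fin M | (j : ℕ) < M}))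
          = Subfield.closure (↑K ∪ Set.range c)
        have he : {j : Fin M | (j : ℕ) < M} = Set.univ := by
          ext j; simpa using j.isLt
        rw [he, Set.image_univ]
      rcases hdich M with h' | h'
      · exact h'
      · exfalso
        rw [hKcM] at h'
        rw [h'] at hlt
        exact lt_irrefl _ hlt
    have hexz : ∃ i, trdegOver (Kc i) (Set.range a) = 0 := ⟨M, hM⟩
    set i₀ := sInf {i | trdegOver (Kc i) (Set.range a) = 0} with hi₀
    have hi₀mem : trdegOver (Kc i₀) (Set.range a) = 0 := Nat.sInf_mem hexz
    have hi₀le : i₀ ≤ M := Nat.sInf_le hM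
    have hi₀pos : 0 < i₀ := by
      rcases Nat.eq_zero_or_pos i₀ with hz | hpos
      · exfalso
        rw [hz] at hi₀mem
        rw [h0] at hi₀mem
        rw [hi₀mem] at hp
        simp at hp
      · exact hpos
    set i := i₀ - 1 with hidef
    have hisucc : i + 1 = i₀ := Nat.succ_pred_eq_of_pos hi₀pos
    have hiM : i < M := lt_of_lt_of_le (by omega) hi₀le
    have hdimi : trdegOver (Kc i) (Set.range a) = p.dim := by
      rcases hdich i with h' | h'
      · exfalso
        have : i₀ ≤ i := Nat.sInf_le h'
        omega
      · exact h'
    have hzero : trdegOver (Kc (i + 1)) (Set.range a) = 0 := by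
      rw [hisucc]; exact hi₀mem
    -- dim ≤ 1
    have hle1 : p.dim ≤ 1 := by
      rw [← hdimi]
      apply trdegOver_le
      intro t hsub hind
      have hKi1 : Kc (i + 1) = Subfield.closure (↑(Kc i) ∪ {c ⟨i, hiM⟩}) := by
        show Subfield.closure (↑K ∪ (c '' {j : Fin M | (j : ℕ) < i + 1}))
          = Subfield.closure (↑(Subfield.closure (↑K ∪ (c '' {j : Fin M | (j : ℕ) < i}))) ∪ {c ⟨i, hiM⟩})
        rw [closure_closure_union]
        congr 1
        rw [Set.union_assoc]
        congr 1
        have hset : {j : Fin M | (j : ℕ) < i + 1}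
            = {j : Fin M | (j : ℕ) < i} ∪ {⟨i, hiM⟩} := by
          ext j
          simp only [Set.mem_setOf_eq, Set.mem_union, Set.mem_singleton_iff, Nat.lt_succ_iff_lt_or_eq]
          constructor
          · rintro (h' | h')
            · exact Or.inl h'
            · exact Or.inr (Fin.ext h')
          · rintro (h' | h')
            · exact Or.inl h'
            · exact Or.inr (by rw [h'])
        rw [hset, Set.image_union, Set.image_singleton]
      have halg : ∀ z ∈ t, IsAlgebraic
          ↥(IntermediateField.adjoin ↥(Kc i) ({c ⟨i, hiM⟩} : Set E.carrier)) z := by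
        intro z hz
        have hz1 : z ∈ Subfield.closure (↑(Kc (i + 1)) ∪ Set.range a) := by
          apply Subfield.closure_mono (Set.union_subset_union_left _ ?_) (hsub hz)
          intro w hw
          rw [hKi1]
          exact Subfield.subset_closure (Or.inl hw)
        have h9 : IsAlgebraic ↥(Kc (i + 1)) z := alg_of_trdegOver_eq_zero hzero hz1
        have h10 : IsAlgebraic
            ↥((IntermediateField.adjoin ↥(Kc i) ({c ⟨i, hiM⟩} : Set E.carrier)).toSubfield) z := by
          rw [adjoin_toSubfield', ← hKi1]
          exact h9
        exact h10
      exact Cardinal.mk_le_one_iff_set_subsingleton.mpr (core (Kc i) _ hind halg)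
    exact le_antisymm hle1 hp
  · -- dim = 1 → Minimal
    intro hdim
    refine ⟨hp, ?_⟩
    intro E K hKk hKσ b hb
    obtain ⟨ψ, hψk, hψa, hψσ⟩ := hb
    by_cases hall : ∀ j, IsAlgOver K (b j)
    · exact Or.inl hall
    right
    push_neg at hall
    obtain ⟨j₀, hj₀⟩ := hall
    have hj₀t : Transcendental ↥K (b j₀) := hj₀
    have hballalg : ∀ j, IsAlgebraic
        ↥(IntermediateField.adjoin ↥K ({b j₀} : Set E.carrier)) (b j) := by
      intro j
      by_contra hnj
      have hjt' : AlgebraicIndependent ↥K ![b j₀, b j] := by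
        by_contra hni
        exact hnj (KEb K (b j₀) (b j) hj₀t hni)
      have hpull : AlgebraicIndependent ↥(p.ext.emb.fieldRange) ![p.a j₀, p.a j] :=
        pullback_pair p E K hKk b ψ hψk hψa j₀ j hjt'
      have hane : p.a j₀ ≠ p.a j := by
        intro heq
        have hinj := hpull.injective
        have h01 : (0 : Fin 2) ≠ 1 := by decide
        apply h01
        apply hinj
        show (![p.a j₀, p.a j] : Fin 2 → p.ext.carrier) 0 = ![p.a j₀, p.a j] 1
        simpa using heq
      have hmem : ∀ j', p.a j' ∈ Subfield.closure
          ((↑(p.ext.emb.fieldRange) : Set p.ext.carrier) ∪ Set.range p.a) := by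
        intro j'
        exact Subfield.subset_closure (Or.inr ⟨j', rfl⟩)
      have h2d : (2 : Cardinal) ≤ p.dim :=
        two_le_trdegOver _ _ (hmem j₀) (hmem j) hane hpull
      rw [hdim] at h2d
      norm_num at h2d
    rw [hdim]
    apply le_antisymm
    · apply trdegOver_le
      intro t hsub hind
      set K' := Subfield.closure ((K : Set E.carrier) ∪ ({b j₀} : Set E.carrier)) with hK'
      have h1 : ∀ s ∈ Set.range b, IsAlgebraic ↥K' s := by
        rintro s ⟨j, rfl⟩
        have := hballalg j
        rw [hK', ← adjoin_toSubfield' K ({b j₀} : Set E.carrier)]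
        exact this
      have halg : ∀ z ∈ t, IsAlgebraic
          ↥(IntermediateField.adjoin ↥K ({b j₀} : Set E.carrier)) z := by
        intro z hz
        have h2 : z ∈ Subfield.closure (↑K' ∪ Set.range b) := by
          apply Subfield.closure_mono (Set.union_subset_union_left _ ?_) (hsub hz)
          intro w hw
          exact Subfield.subset_closure (Or.inl hw)
        have h3 : IsAlgebraic ↥K' z := algA K' (Set.range b) h1 h2
        have h4 : IsAlgebraic
            ↥((IntermediateField.adjoin ↥K ({b j₀} : Set E.carrier)).toSubfield) z := by
          rw [adjoin_toSubfield', ← hK']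
          exact h3
        exact h4
      exact Cardinal.mk_le_one_iff_set_subsingleton.mpr (core K _ hind halg)
    · exact one_le_trdegOver K (Set.range b) (b j₀)
        (Subfield.subset_closure (Or.inr ⟨j₀, rfl⟩)) hj₀t
end

section
/- Let k be an algebraically closed field of characteristic zero and σ a field automorphism of k. Then the fixed field {x ∈ k : σ(x) = x} is not finitely generated as a field; that is, there is no finite subset S of k such that the fixed field equals the smallest subfield of k containing S. -/
universe u v w

open Polynomial

set_option synthInstance.maxHeartbeats 1000000 in
set_option maxHeartbeats 1000000 in
/-- Algebraic elements of a purely transcendental field extension belong to the base field. -/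
lemma core_rat {F : Type w} {k : Type u} [Field F] [Field k] [Algebra F k] {ι : Type v}
    (x : ι → k) (hx : AlgebraicIndependent F x) {y : k}
    (hy : y ∈ IntermediateField.adjoin F (Set.range x)) (halg : IsAlgebraic F y) :
    ∃ c : F, algebraMap F k c = y := by
  classical
  set R := MvPolynomial ι F
  set FR := FractionRing R
  let e := hx.aevalEquivField
  set Y : IntermediateField.adjoin F (Set.range x) := ⟨y, hy⟩ with hY
  have hYalg : IsAlgebraic F Y := by
    rwa [← isAlgebraic_algHom_iff (IntermediateField.adjoin F (Set.range x)).val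
      Subtype.val_injective]
  set z : FR := e.symm Y with hz
  have hez : e z = Y := e.apply_symm_apply Y
  have hzalg : IsAlgebraic F z := by
    refine (isAlgebraic_algHom_iff e.toAlgHom e.injective).mp ?_
    rw [show e.toAlgHom z = e z from rfl, hez]; exact hYalg
  have hzint : IsIntegral R z := (hzalg.isIntegral).tower_top
  obtain ⟨w, hw⟩ := IsIntegrallyClosed.isIntegral_iff.mp hzint
  have hwalg : IsAlgebraic F w := by
    rw [← isAlgebraic_algebraMap_iff (IsFractionRing.injective R FR)]
    rw [hw]; exact hzalg
  -- w is a constant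
  let ε : R →ₐ[F] F := MvPolynomial.aeval 0
  set c : F := ε w with hc
  have hwC : w = MvPolynomial.C c := by
    by_contra hne
    set v : R := w - MvPolynomial.C c with hv
    have hv0 : v ≠ 0 := sub_ne_zero.mpr hne
    have hvint : IsIntegral F v := by
      refine (hwalg.isIntegral).sub ?_
      exact isIntegral_algebraMap (x := c)
    have hεv : ε v = 0 := by
      have hCc : ε (MvPolynomial.C c) = c := by
        rw [show (ε (MvPolynomial.C c) : F) = algebraMap F F c from MvPolynomial.aeval_C _ _, Algebra.algebraMap_self, RingHom.id_apply]
      rw [hv, map_sub, hCc, hc, sub_self]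
    have h0 : (minpoly F v).coeff 0 ≠ 0 := minpoly.coeff_zero_ne_zero hvint hv0
    apply h0
    have h1 : ε (Polynomial.aeval v (minpoly F v)) = 0 := by
      rw [minpoly.aeval]; exact map_zero ε
    rw [← Polynomial.aeval_algHom_apply, hεv] at h1
    rwa [Polynomial.coeff_zero_eq_aeval_zero]
  have hzc : z = algebraMap F FR c := by
    rw [← hw, hwC, ← MvPolynomial.algebraMap_eq, ← IsScalarTower.algebraMap_apply]
  refine ⟨c, ?_⟩
  have h2 : Y = algebraMap F _ c := by
    rw [← hez, hzc, AlgEquiv.commutes]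
  have h3 := congrArg (Subtype.val) h2
  rw [hY] at h3
  simpa using h3.symm

set_option synthInstance.maxHeartbeats 1000000 in
set_option maxHeartbeats 1000000 in
/-- In a finitely generated subfield of an algebraically closed field of characteristic zero,
the degrees of algebraic elements are bounded. -/
lemma bounded_deg {k : Type u} [Field k] [IsAlgClosed k] [CharZero k] (S : Set k)
    (hS : S.Finite) :
    ∃ N : ℕ, ∀ x ∈ Subfield.closure S, IsAlgebraic ℚ x → (minpoly ℚ x).natDegree ≤ N := by
  classical
  obtain ⟨b, hb⟩ := exists_isTranscendenceBasis ℚ k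
  set K₀ := IntermediateField.adjoin ℚ (Set.range ((↑) : b → k)) with hK₀
  haveI : Algebra.IsAlgebraic K₀ k := hb.isAlgebraic_field
  have hint : ∀ z : k, IsIntegral ↥K₀ z := fun z =>
    (Algebra.IsAlgebraic.isAlgebraic (R := ↥K₀) z).isIntegral
  haveI : Finite ↥S := hS.to_subtype
  set E := IntermediateField.adjoin ↥K₀ S with hE
  haveI : FiniteDimensional ↥K₀ ↥E := IntermediateField.finiteDimensional_adjoin
    (fun z _ => hint z)
  refine ⟨Module.finrank ↥K₀ ↥E, fun x hx hxalg => ?_⟩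
  have hxE : x ∈ E := by
    have hle : Subfield.closure S ≤ E.toSubfield :=
      (Subfield.closure_le).mpr (IntermediateField.subset_adjoin _ _)
    exact hle hx
  set P := minpoly ↥K₀ x with hP
  have hPmonic : P.Monic := minpoly.monic (hint x)
  set Pk := P.map (algebraMap ↥K₀ k) with hPk
  have hPkmonic : Pk.Monic := hPmonic.map _
  -- all coefficients of `Pk` are rational
  have hcoeff : ∀ n, Pk.coeff n ∈ Set.range (algebraMap ℚ k) := by
    intro n
    have hdvd : P ∣ (minpoly ℚ x).map (algebraMap ℚ ↥K₀) :=
      minpoly.dvd _ _ (by rw [Polynomial.aeval_map_algebraMap]; exact minpoly.aeval ℚ x)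
    have hdvdk : Pk ∣ (minpoly ℚ x).map (algebraMap ℚ k) := by
      have h := Polynomial.map_dvd (algebraMap ↥K₀ k) hdvd
      rwa [Polynomial.map_map, ← IsScalarTower.algebraMap_eq] at h
    have hroots : ∀ r ∈ Pk.roots, IsAlgebraic ℚ r := by
      intro r hr
      have h0 : Polynomial.eval r Pk = 0 := Polynomial.isRoot_of_mem_roots hr
      have h1 : Polynomial.eval r ((minpoly ℚ x).map (algebraMap ℚ k)) = 0 := by
        obtain ⟨u, hu⟩ := hdvdk
        rw [hu, Polynomial.eval_mul, h0, zero_mul]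
      exact ⟨minpoly ℚ x, minpoly.ne_zero hxalg.isIntegral,
        by rwa [Polynomial.aeval_def, ← Polynomial.eval_map]⟩
    have hsplit : Pk = (Pk.roots.map fun a => X - C a).prod :=
      (IsAlgClosed.splits Pk).eq_prod_roots_of_monic hPkmonic
    set E' := algebraicClosure ℚ k with hE'
    set t : Multiset ↥E' := Pk.roots.attach.map
      (fun r => (⟨r.1, (mem_algebraicClosure_iff).mpr (hroots r.1 r.2)⟩ : ↥E')) with ht
    set PE : Polynomial ↥E' := (t.map fun a => X - C a).prod with hPE
    have hPEmap : PE.map (algebraMap ↥E' k) = Pk := by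
      conv_rhs => rw [hsplit]
      rw [hPE, Polynomial.map_multiset_prod, Multiset.map_map, ht, Multiset.map_map]
      conv_rhs => rw [← Multiset.attach_map_val Pk.roots, Multiset.map_map]
      apply congrArg Multiset.prod
      apply Multiset.map_congr rfl
      intro r hr
      simp [Polynomial.map_sub]
    have hvK : Pk.coeff n ∈ K₀ := by
      rw [hPk, Polynomial.coeff_map]
      exact SetLike.coe_mem _
    have hvalg : IsAlgebraic ℚ (Pk.coeff n) := by
      rw [← hPEmap, Polynomial.coeff_map]
      exact mem_algebraicClosure_iff.mp (SetLike.coe_mem _)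
    obtain ⟨c, hc⟩ := core_rat ((↑) : b → k) hb.1 (by rwa [← hK₀]) hvalg
    exact ⟨c, hc⟩
  have hlift : Pk ∈ Polynomial.lifts (algebraMap ℚ k) :=
    (Polynomial.lifts_iff_coeff_lifts _).mpr hcoeff
  obtain ⟨q₀, hq₀map, hq₀deg, hq₀monic⟩ :=
    Polynomial.lifts_and_degree_eq_and_monic hlift hPkmonic
  have haq : Polynomial.aeval x q₀ = 0 := by
    rw [Polynomial.aeval_def, ← Polynomial.eval_map, hq₀map, hPk, Polynomial.eval_map,
      ← Polynomial.aeval_def]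
    exact minpoly.aeval _ _
  have hdvd2 : minpoly ℚ x ∣ q₀ := minpoly.dvd ℚ x haq
  have h1 : (minpoly ℚ x).natDegree ≤ q₀.natDegree :=
    Polynomial.natDegree_le_of_dvd hdvd2 hq₀monic.ne_zero
  have h2 : q₀.natDegree = P.natDegree := by
    have : Pk.natDegree = P.natDegree := Polynomial.natDegree_map _
    rw [← this, ← hq₀map, Polynomial.natDegree_map]
  have h3 : P.natDegree ≤ Module.finrank ↥K₀ ↥E := by
    have hme := minpoly.natDegree_le (A := ↥K₀) (⟨x, hxE⟩ : ↥E)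
    rwa [show minpoly ↥K₀ (⟨x, hxE⟩ : ↥E) = P from ?_] at hme
    rw [hP, ← minpoly.algHom_eq E.val Subtype.val_injective (⟨x, hxE⟩ : ↥E)]
    rfl
  omega

set_option synthInstance.maxHeartbeats 400000 in
set_option maxHeartbeats 1000000 in
lemma exists_root_in_F {k : Type u} [Field k] [IsAlgClosed k] (σ : k ≃+* k) (F : Subfield k)
    (hF : ∀ x : k, x ∈ F ↔ σ x = x) {ℓ : ℕ} (hℓ : ℓ.Prime) {ζ : k}
    (hζ : IsPrimitiveRoot ζ ℓ) (hζF : σ ζ ≠ ζ) {x : k} (hx : x ∈ F) (hx0 : x ≠ 0) :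
    ∃ y : k, y ∈ F ∧ y ^ ℓ = x := by
  haveI : Fact ℓ.Prime := ⟨hℓ⟩
  haveI : NeZero ℓ := ⟨hℓ.ne_zero⟩
  -- exponent comparison for powers of ζ
  have hmod : ∀ m : ℕ, ζ ^ m = ζ ^ (m % ℓ) := by
    intro m
    conv_lhs => rw [← Nat.mod_add_div m ℓ]
    rw [pow_add, pow_mul, hζ.pow_eq_one, one_pow, mul_one]
  have hpow : ∀ m n : ℕ, (m : ZMod ℓ) = (n : ZMod ℓ) → ζ ^ m = ζ ^ n := by
    intro m n h
    have hmn : m % ℓ = n % ℓ := (ZMod.natCast_eq_natCast_iff _ _ _).mp h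
    rw [hmod m, hmod n, hmn]
  obtain ⟨α, hα⟩ := IsAlgClosed.exists_pow_nat_eq x hℓ.pos
  have hα0 : α ≠ 0 := by
    rintro rfl
    rw [zero_pow hℓ.ne_zero] at hα
    exact hx0 hα.symm
  have hσα : (σ α) ^ ℓ = x := by rw [← map_pow, hα, (hF x).mp hx]
  have hu : (σ α / α) ^ ℓ = 1 := by
    rw [div_pow, hσα, hα, div_self hx0]
  obtain ⟨i, hilt, hiu⟩ := hζ.eq_pow_of_pow_eq_one hu
  have hσαeq : σ α = ζ ^ i * α := by
    rw [hiu, div_mul_cancel₀ _ hα0]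
  have hσζpow : (σ ζ) ^ ℓ = 1 := by rw [← map_pow, hζ.pow_eq_one, map_one]
  obtain ⟨a, halt, haζ⟩ := hζ.eq_pow_of_pow_eq_one hσζpow
  have hA : (a : ZMod ℓ) ≠ 1 := by
    intro h
    apply hζF
    rw [← haζ]
    calc ζ ^ a = ζ ^ 1 := hpow a 1 (by rw [h, Nat.cast_one])
    _ = ζ := pow_one ζ
  set A : ZMod ℓ := (a : ZMod ℓ) with hAdef
  have hA1 : A - 1 ≠ 0 := sub_ne_zero.mpr hA
  set j : ZMod ℓ := (A - 1)⁻¹ * (-(i : ZMod ℓ)) with hjdef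
  set jn : ℕ := j.val with hjn
  have hjcast : (jn : ZMod ℓ) = j := ZMod.natCast_rightInverse j
  have hkey : (A - 1) * j = -(i : ZMod ℓ) := by
    rw [hjdef, ← mul_assoc, mul_inv_cancel₀ hA1, one_mul]
  refine ⟨α * ζ ^ jn, ?_, ?_⟩
  · rw [hF]
    rw [map_mul, map_pow, hσαeq, ← haζ, ← pow_mul]
    rw [mul_comm (ζ ^ i * α) (ζ ^ (a * jn)), ← mul_assoc, ← pow_add]
    have hexp : ζ ^ (a * jn + i) = ζ ^ jn := by
      apply hpow
      push_cast
      rw [hjcast, ← hAdef]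
      linear_combination hkey
    rw [hexp, mul_comm]
  · rw [mul_pow, ← pow_mul, mul_comm jn ℓ, pow_mul, hζ.pow_eq_one, one_pow, mul_one, hα]

lemma two_not_pow (ℓ : ℕ) (hℓ : 3 ≤ ℓ) : ∀ b : ℚ, b ^ ℓ ≠ 2 := by
  intro b hb
  have hb0 : b ≠ 0 := by
    rintro rfl
    rw [zero_pow (by omega)] at hb
    norm_num at hb
  have hv : padicValRat 2 (b ^ ℓ) = ℓ * padicValRat 2 b := padicValRat.pow b
  rw [hb] at hv
  rw [show padicValRat 2 2 = 1 from padicValRat.self (by norm_num)] at hv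
  have hdvd : (ℓ : ℤ) ∣ 1 := ⟨padicValRat 2 b, hv⟩
  have := Int.le_of_dvd one_pos hdvd
  omega

theorem statement18 {k : Type u} [Field k] [IsAlgClosed k] [CharZero k]
    (σ : k ≃+* k) (F : Subfield k) (hF : ∀ x : k, x ∈ F ↔ σ x = x) :
    ¬ ∃ S : Set k, S.Finite ∧ F = Subfield.closure S := by
  rintro ⟨S, hSfin, hFS⟩
  obtain ⟨N, hN⟩ := bounded_deg S hSfin
  obtain ⟨ℓ, hℓge, hℓprime⟩ := Nat.exists_infinite_primes (N + 3)
  haveI : NeZero ((ℓ : k)) := ⟨Nat.cast_ne_zero.mpr hℓprime.ne_zero⟩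
  -- a primitive ℓ-th root of unity
  have hcycdeg : (Polynomial.cyclotomic ℓ k).degree ≠ 0 := by
    rw [Polynomial.degree_cyclotomic]
    simp only [ne_eq, Nat.cast_eq_zero]
    have := Nat.totient_prime hℓprime
    omega
  obtain ⟨ζ, hζroot⟩ := IsAlgClosed.exists_root _ hcycdeg
  have hζ : IsPrimitiveRoot ζ ℓ := Polynomial.isRoot_cyclotomic_iff.mp hζroot
  by_cases hσζ : σ ζ = ζ
  · -- then ζ ∈ F, but its degree is ℓ - 1 > N
    have hζF : ζ ∈ Subfield.closure S := by
      rw [← hFS]; exact (hF ζ).mpr hσζ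
    have hζalg : IsAlgebraic ℚ ζ := by
      refine ⟨X ^ ℓ - C 1, Polynomial.X_pow_sub_C_ne_zero hℓprime.pos 1, ?_⟩
      simp [hζ.pow_eq_one]
    have hd := hN ζ hζF hζalg
    rw [← Polynomial.cyclotomic_eq_minpoly_rat hζ hℓprime.pos,
      Polynomial.natDegree_cyclotomic, Nat.totient_prime hℓprime] at hd
    omega
  · -- then 2 has an ℓ-th root y in F, of degree ℓ > N
    have h2F : (2 : k) ∈ F := (hF 2).mpr (map_ofNat σ 2)
    obtain ⟨y, hyF, hyℓ⟩ := exists_root_in_F σ F hF hℓprime hζ hσζ h2F two_ne_zero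
    have haev : Polynomial.aeval y ((X : ℚ[X]) ^ ℓ - C 2) = 0 := by
      simp [hyℓ]
    have hyalg : IsAlgebraic ℚ y :=
      ⟨X ^ ℓ - C 2, Polynomial.X_pow_sub_C_ne_zero hℓprime.pos 2, haev⟩
    have hirr : Irreducible ((X : ℚ[X]) ^ ℓ - C 2) :=
      X_pow_sub_C_irreducible_of_prime hℓprime (two_not_pow ℓ (by omega))
    have hmin : minpoly ℚ y = X ^ ℓ - C 2 :=
      (minpoly.eq_of_irreducible_of_monic hirr haev
        (Polynomial.monic_X_pow_sub_C _ hℓprime.ne_zero)).symm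
    have hd := hN y (by rw [← hFS]; exact hyF) hyalg
    rw [hmin, Polynomial.natDegree_X_pow_sub_C] at hd
    omega
end

section
/- For every field automorphism σ of the algebraic closure of ℚ, the fixed field {x : σ(x) = x} is an infinite-degree extension of ℚ; that is, the fixed field of σ is never finite-dimensional as a ℚ-vector space. -/
lemma notsq_prime {p : ℕ} (hp : p.Prime) : ¬ IsSquare p := by
  rintro ⟨k, hk⟩
  rcases (Nat.Prime.eq_one_or_self_of_dvd hp k ⟨k, hk⟩) with h | h
  · subst h; simp at hk; exact hp.one_lt.ne' hk
  · subst h; nlinarith [hp.two_le]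

lemma notsq_mul_prime {p q : ℕ} (hp : p.Prime) (hq : q.Prime) (hne : p ≠ q) :
    ¬ IsSquare (p * q) := by
  rintro ⟨k, hk⟩
  have hpk : p ∣ k := by
    have : p ∣ k * k := ⟨q, hk.symm⟩
    exact hp.dvd_of_dvd_pow (n := 2) (by rwa [sq])
  obtain ⟨m, rfl⟩ := hpk
  have hq' : p ∣ q := by
    have h1 : p * q = p * (p * m * m) := by rw [hk]; ring
    have h2 : q = p * m * m := Nat.eq_of_mul_eq_mul_left hp.pos h1
    exact ⟨m * m, by rw [h2]; ring⟩
  exact hne ((Nat.prime_dvd_prime_iff_eq hp hq).mp hq')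

lemma notsq_sq_mul {a x : ℕ} (ha : a ≠ 0) (hx : ¬ IsSquare x) : ¬ IsSquare (a * a * x) := by
  rintro ⟨k, hk⟩
  have hak : a ∣ k := by
    have h2 : a ^ 2 ∣ k ^ 2 := by rw [sq, sq, ← hk]; exact ⟨x, by ring⟩
    exact (Nat.pow_dvd_pow_iff two_ne_zero).mp h2
  obtain ⟨m, rfl⟩ := hak
  apply hx
  refine ⟨m, Nat.eq_of_mul_eq_mul_left (Nat.pos_of_ne_zero (mul_ne_zero ha ha)) ?_⟩
  calc a * a * x = a * m * (a * m) := hk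
    _ = a * a * (m * m) := by ring

lemma mem_span_of_adjoin {E : Type*} [Field E] [Algebra ℚ E] [CharZero E] (y : E) (m : ℚ)
    (hy : y ^ 2 = (m : E)) {z : E} (hz : z ∈ IntermediateField.adjoin ℚ {y}) :
    ∃ a b : ℚ, z = (a : E) + (b : E) * y := by
  have hcast : ∀ a : ℚ, algebraMap ℚ E a = (a : E) := fun a => (eq_ratCast (algebraMap ℚ E) a)
  have hint : IsIntegral ℚ y := by
    refine ⟨Polynomial.X ^ 2 - Polynomial.C m, Polynomial.monic_X_pow_sub_C m two_ne_zero, ?_⟩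
    have : Polynomial.eval₂ (algebraMap ℚ E) y (Polynomial.X ^ 2 - Polynomial.C m)
        = y ^ 2 - (m : E) := by simp [hcast]
    rw [this, hy, sub_self]
  set V : Submodule ℚ E := Submodule.span ℚ {1, y} with hV
  have h1V : (1 : E) ∈ V := Submodule.subset_span (by simp)
  have hyV : y ∈ V := Submodule.subset_span (by simp)
  have repr : ∀ x ∈ V, ∃ a b : ℚ, x = (a : E) + (b : E) * y := by
    intro x hx
    obtain ⟨a, b, hab⟩ := Submodule.mem_span_pair.mp hx
    exact ⟨a, b, by rw [← hab, Algebra.smul_def, Algebra.smul_def, hcast, hcast, mul_one]⟩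
  have memV : ∀ a b : ℚ, (a : E) + (b : E) * y ∈ V := by
    intro a b
    apply Submodule.add_mem
    · simpa [Algebra.smul_def, hcast] using V.smul_mem a h1V
    · simpa [Algebra.smul_def, hcast] using V.smul_mem b hyV
  have hmul : ∀ u v : E, u ∈ V → v ∈ V → u * v ∈ V := by
    intro u v hu hv
    obtain ⟨a, b, rfl⟩ := repr u hu
    obtain ⟨c, d, rfl⟩ := repr v hv
    have : ((a : E) + b * y) * ((c : E) + d * y)
        = ((a * c + b * d * m : ℚ) : E) + ((a * d + b * c : ℚ) : E) * y := by
      push_cast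
      linear_combination ((b : E) * (d : E)) * hy
    rw [this]; exact memV _ _
  let S : Subalgebra ℚ E := V.toSubalgebra h1V hmul
  have hle : Algebra.adjoin ℚ ({y} : Set E) ≤ S := Algebra.adjoin_le (by simpa using (show y ∈ S from hyV))
  have hz' : z ∈ Algebra.adjoin ℚ ({y} : Set E) := by
    have h := IntermediateField.adjoin_simple_toSubalgebra_of_isAlgebraic hint.isAlgebraic
    rw [← h]
    exact hz
  exact repr z (hle hz')

lemma no_second_root {E : Type*} [Field E] [Algebra ℚ E] [CharZero E] {y1 y2 : E} {m1 m2 : ℕ}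
    (h1 : y1 ^ 2 = (m1 : E)) (h2 : y2 ^ 2 = (m2 : E))
    (hm1 : ¬ IsSquare m1) (hm2 : ¬ IsSquare m2) (hm12 : ¬ IsSquare (m1 * m2))
    (hmem : y2 ∈ IntermediateField.adjoin ℚ {y1}) : False := by
  have qinj : Function.Injective ((↑) : ℚ → E) := Rat.cast_injective
  have h1' : y1 ^ 2 = ((m1 : ℚ) : E) := by rw [h1]; push_cast; ring
  obtain ⟨a, b, hy2⟩ := mem_span_of_adjoin y1 (m1 : ℚ) h1' hmem
  have key : (m2 : E) = (a : E) ^ 2 + (b : E) ^ 2 * (m1 : E) + 2 * a * b * y1 := by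
    rw [← h2, hy2]
    linear_combination (b : E) ^ 2 * h1
  by_cases hb : b = 0
  · apply hm2
    rw [← Rat.isSquare_natCast_iff]
    refine ⟨a, ?_⟩
    apply qinj
    push_cast
    rw [key, hb]
    push_cast
    ring
  by_cases ha : a = 0
  · apply hm12
    rw [← Rat.isSquare_natCast_iff]
    refine ⟨b * m1, ?_⟩
    have hq : (m2 : ℚ) = b ^ 2 * m1 := by
      apply qinj; push_cast; rw [key, ha]; push_cast; ring
    push_cast
    rw [hq]; ring
  · -- both a b nonzero : y1 is rational, contradiction with hm1
    have hcne : (2 * a * b : ℚ) ≠ 0 := by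
      simp [ha, hb]
    apply hm1
    rw [← Rat.isSquare_natCast_iff]
    refine ⟨(m2 - a ^ 2 - b ^ 2 * m1) / (2 * a * b), ?_⟩
    have hsq : ((2 * a * b) ^ 2 * (m1 : ℚ)) = (m2 - a ^ 2 - b ^ 2 * m1) ^ 2 := by
      apply qinj
      push_cast
      linear_combination (-(2 * (a : E) * b) ^ 2) * h1 -
        (2 * (a : E) * b * y1 + (m2 : E) - (a : E) ^ 2 - (b : E) ^ 2 * (m1 : E)) * key
    field_simp
    linear_combination hsq

theorem statement19 (σ : AlgebraicClosure ℚ ≃+* AlgebraicClosure ℚ)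
    (F : Subfield (AlgebraicClosure ℚ)) (hF : ∀ x, x ∈ F ↔ σ x = x) :
    ¬ FiniteDimensional ℚ F := by
  intro hfd
  classical
  haveI : CharZero F := inferInstance
  -- choose square roots of naturals in the algebraic closure
  have hsq : ∀ n : ℕ, ∃ z : AlgebraicClosure ℚ, z ^ 2 = (n : AlgebraicClosure ℚ) :=
    fun n => IsAlgClosed.exists_pow_nat_eq _ zero_lt_two
  choose s hs using hsq
  have hpm : ∀ p : ℕ, σ (s p) = s p ∨ σ (s p) = -(s p) := by
    intro p
    have h : σ (s p) * σ (s p) = s p * s p := by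
      have : σ (s p) ^ 2 = s p ^ 2 := by
        rw [← map_pow, hs, map_natCast]
      simpa [sq] using this
    exact mul_self_eq_mul_self_iff.mp h
  set A := {p : ℕ | p.Prime ∧ σ (s p) = s p} with hA
  set B := {p : ℕ | p.Prime ∧ σ (s p) = -(s p)} with hB
  have hABinf : (A ∪ B).Infinite :=
    Nat.infinite_setOf_prime.mono (fun p hp => (hpm p).imp (fun h => ⟨hp, h⟩) (fun h => ⟨hp, h⟩))
  have key : ∃ (c : ℕ) (P : Set ℕ), P.Infinite ∧
      (∀ p ∈ P, ¬ IsSquare (c * p)) ∧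
      (∀ p ∈ P, ∀ q ∈ P, p ≠ q → ¬ IsSquare ((c * p) * (c * q))) ∧
      (∀ p ∈ P, ∃ y : F, (y : AlgebraicClosure ℚ) ^ 2 = ((c * p : ℕ) : AlgebraicClosure ℚ)) := by
    rcases Set.infinite_union.mp hABinf with hAinf | hBinf
    · refine ⟨1, A, hAinf, ?_, ?_, ?_⟩
      · intro p hp
        rw [one_mul]
        exact notsq_prime hp.1
      · intro p hp q hq hne
        rw [one_mul, one_mul]
        exact notsq_mul_prime hp.1 hq.1 hne
      · intro p hp
        exact ⟨⟨s p, (hF _).mpr hp.2⟩, by simpa using hs p⟩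
    · obtain ⟨p₀, hp₀⟩ := hBinf.nonempty
      refine ⟨p₀, B \ {p₀}, hBinf.diff (Set.finite_singleton p₀), ?_, ?_, ?_⟩
      · intro p hp
        exact notsq_mul_prime hp₀.1 hp.1.1 (fun h => hp.2 (by simp [h.symm]))
      · intro p hp q hq hne
        have hrw : (p₀ * p) * (p₀ * q) = p₀ * p₀ * (p * q) := by ring
        rw [hrw]
        exact notsq_sq_mul hp₀.1.pos.ne' (notsq_mul_prime hp.1.1 hq.1.1 hne)
      · intro p hp
        have hmem : s p₀ * s p ∈ F := by
          rw [hF, map_mul, hp₀.2, hp.1.2]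
          ring
        refine ⟨⟨s p₀ * s p, hmem⟩, ?_⟩
        push_cast
        rw [mul_pow, hs, hs]
  obtain ⟨c, P, hPinf, hns, hns2, hy0⟩ := key
  have hy' : ∀ p : ℕ, ∃ y : F, p ∈ P → (y : AlgebraicClosure ℚ) ^ 2 = ((c * p : ℕ) : AlgebraicClosure ℚ) := by
    intro p
    by_cases h : p ∈ P
    · obtain ⟨y, hy⟩ := hy0 p h
      exact ⟨y, fun _ => hy⟩
    · exact ⟨0, fun h' => absurd h' h⟩
  choose y hy using hy'
  have hyF : ∀ p ∈ P, (y p) ^ 2 = ((c * p : ℕ) : F) := by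
    intro p hp
    apply Subtype.coe_injective
    have h := hy p hp
    push_cast at h ⊢
    exact h
  haveI : Finite (IntermediateField ℚ F) :=
    Field.finite_intermediateField_of_exists_primitive_element ℚ F
      (Field.exists_primitive_element ℚ F)
  have hinj : Set.InjOn (fun p => IntermediateField.adjoin ℚ ({y p} : Set F)) P := by
    intro p hp q hq hpq
    by_contra hne
    change IntermediateField.adjoin ℚ {y p} = IntermediateField.adjoin ℚ {y q} at hpq
    have hmem : y q ∈ IntermediateField.adjoin ℚ ({y p} : Set F) := by
      rw [hpq]
      exact IntermediateField.mem_adjoin_simple_self ℚ (y q)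
    exact no_second_root (hyF p hp) (hyF q hq) (hns p hp) (hns q hq)
      (hns2 p hp q hq hne) hmem
  exact ((Set.infinite_image_iff hinj).mpr hPinf) (Set.toFinite _)
end
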